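/- Let A ⊆ ℝ^m and B ⊆ ℝ^m be nonempty closed convex sets with A ⊆ B, let δ ∈ (0,1) with d_tH(hom A, hom B) ≤ δ, and let y ∈ bd A. Then there exists a nonzero z ∈ bd(hom B) such that d(z/‖z‖, cone{(y,1)}) ≤ δ. -/

import Mathlib

open Metric Set

noncomputable section

/-- `ℝ^m` as a Euclidean space. -/
abbrev Em (m : ℕ) := EuclideanSpace ℝ (Fin m)

/-- `ℝ^(m+1)` realized as the L²-product `ℝ^m × ℝ`. -/
abbrev Em1 (m : ℕ) := WithLp 2 (Em m × ℝ)

/-- The conic hull: all finite nonnegative combinations of elements of `M`. -/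
def coneHull {V : Type*} [AddCommMonoid V] [Module ℝ V] (M : Set V) : Set V :=
  {x | ∃ (k : ℕ) (c : Fin k → ℝ) (v : Fin k → V),
    (∀ i, 0 ≤ c i) ∧ (∀ i, v i ∈ M) ∧ x = ∑ i, c i • v i}

/-- The ray `cone {v} = {λ • v : λ ≥ 0}`. -/
def ray {V : Type*} [AddCommMonoid V] [Module ℝ V] (v : V) : Set V :=
  {x | ∃ l : ℝ, 0 ≤ l ∧ x = l • v}

/-- The vector `(y, 1) ∈ ℝ^(m+1)` obtained by appending a last coordinate `1` to `y`. -/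
def lift1 {m : ℕ} (y : Em m) : Em1 m := (WithLp.equiv 2 (Em m × ℝ)).symm (y, 1)

/-- The homogenization `hom Z = cl (cone (Z × {1}))` of a set `Z ⊆ ℝ^m`. -/
def homog {m : ℕ} (Z : Set (Em m)) : Set (Em1 m) := closure (coneHull (lift1 '' Z))

/-- The truncated Hausdorff distance `d_tH(K₁, K₂) = d_H(K₁ ∩ 𝔹, K₂ ∩ 𝔹)`. -/
def dtH {V : Type*} [NormedAddCommGroup V] (K₁ K₂ : Set V) : ℝ :=
  hausdorffDist (K₁ ∩ closedBall 0 1) (K₂ ∩ closedBall 0 1)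

open scoped InnerProductSpace
open Filter Topology

set_option maxHeartbeats 1000000
set_option synthInstance.maxHeartbeats 400000

section ConeHullLemmas

variable {V : Type*} [AddCommMonoid V] [Module ℝ V] {M : Set V}

lemma zero_mem_coneHull (M : Set V) : (0 : V) ∈ coneHull M :=
  ⟨0, fun i => i.elim0, fun i => i.elim0, fun i => i.elim0, fun i => i.elim0, by simp⟩

lemma mem_coneHull_of_mem {x : V} (hx : x ∈ M) : x ∈ coneHull M :=
  ⟨1, fun _ => 1, fun _ => x, fun _ => zero_le_one, fun _ => hx, by simp⟩

lemma coneHull_smul_mem {a : ℝ} (ha : 0 ≤ a) {x : V} (hx : x ∈ coneHull M) :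
    a • x ∈ coneHull M := by
  obtain ⟨k, c, v, hc, hv, rfl⟩ := hx
  refine ⟨k, fun i => a * c i, v, fun i => mul_nonneg ha (hc i), hv, ?_⟩
  rw [Finset.smul_sum]
  simp [smul_smul]

lemma coneHull_add_mem {x y : V} (hx : x ∈ coneHull M) (hy : y ∈ coneHull M) :
    x + y ∈ coneHull M := by
  obtain ⟨k, c, v, hc, hv, rfl⟩ := hx
  obtain ⟨l, d, w, hd, hw, rfl⟩ := hy
  refine ⟨k + l, Fin.append c d, Fin.append v w, ?_, ?_, ?_⟩
  · intro i
    refine Fin.addCases (fun j => ?_) (fun j => ?_) i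
    · simpa using hc j
    · simpa using hd j
  · intro i
    refine Fin.addCases (fun j => ?_) (fun j => ?_) i
    · simpa using hv j
    · simpa using hw j
  · rw [Fin.sum_univ_add]
    simp

lemma coneHull_convex : Convex ℝ (coneHull M) := by
  intro x hx y hy a b ha hb _
  exact coneHull_add_mem (coneHull_smul_mem ha hx) (coneHull_smul_mem hb hy)

lemma coneHull_mono {M N : Set V} (h : M ⊆ N) : coneHull M ⊆ coneHull N := by
  rintro x ⟨k, c, v, hc, hv, rfl⟩
  exact ⟨k, c, v, hc, fun i => h (hv i), rfl⟩

end ConeHullLemmas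

section HomogLemmas

variable {m : ℕ}

/-- first-coordinate projection as a continuous linear map -/
def p1 (m : ℕ) : Em1 m →L[ℝ] Em m :=
  (ContinuousLinearMap.fst ℝ (Em m) ℝ).comp
    (WithLp.prodContinuousLinearEquiv 2 ℝ (Em m) ℝ).toContinuousLinearMap

/-- last-coordinate projection as a continuous linear map -/
def p2 (m : ℕ) : Em1 m →L[ℝ] ℝ :=
  (ContinuousLinearMap.snd ℝ (Em m) ℝ).comp
    (WithLp.prodContinuousLinearEquiv 2 ℝ (Em m) ℝ).toContinuousLinearMap

@[simp] lemma p1_lift1 (y : Em m) : p1 m (lift1 y) = y := by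
  simp [p1, lift1]

@[simp] lemma p2_lift1 (y : Em m) : p2 m (lift1 y) = 1 := by
  simp [p2, lift1]

lemma continuous_lift1 : Continuous (lift1 (m := m)) := by
  have : Continuous (fun y : Em m => (y, (1 : ℝ))) := continuous_id.prodMk continuous_const
  exact ((WithLp.prodContinuousLinearEquiv 2 ℝ (Em m) ℝ).symm.continuous).comp this

lemma isClosed_homog (Z : Set (Em m)) : IsClosed (homog Z) := isClosed_closure

lemma zero_mem_homog (Z : Set (Em m)) : (0 : Em1 m) ∈ homog Z :=
  subset_closure (zero_mem_coneHull _)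

lemma homog_mono {Z W : Set (Em m)} (h : Z ⊆ W) : homog Z ⊆ homog W :=
  closure_mono (coneHull_mono (image_mono h))

lemma convex_homog (Z : Set (Em m)) : Convex ℝ (homog Z) :=
  coneHull_convex.closure

lemma homog_smul_mem {Z : Set (Em m)} {a : ℝ} (ha : 0 ≤ a) {x : Em1 m} (hx : x ∈ homog Z) :
    a • x ∈ homog Z :=
  map_mem_closure (continuous_const_smul a) hx (fun _ hy => coneHull_smul_mem ha hy)

lemma mem_homog_of_mem {Z : Set (Em m)} {y : Em m} (hy : y ∈ Z) : lift1 y ∈ homog Z :=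
  subset_closure (mem_coneHull_of_mem ⟨y, hy, rfl⟩)

/-- conic combinations of lifted points with positive last coordinate dehomogenize into `A`. -/
lemma coneHull_section {A : Set (Em m)} (hAconv : Convex ℝ A) {q : Em1 m}
    (hq : q ∈ coneHull (lift1 '' A)) (hq2 : 0 < p2 m q) :
    (p2 m q)⁻¹ • p1 m q ∈ A := by
  obtain ⟨k, c, v, hc, hv, rfl⟩ := hq
  choose a ha hav using hv
  have h1 : p1 m (∑ i, c i • v i) = ∑ i, c i • a i := by
    rw [map_sum]
    congr 1; ext i
    rw [map_smul, ← hav i, p1_lift1]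
  have h2 : p2 m (∑ i, c i • v i) = ∑ i, c i := by
    rw [map_sum]
    congr 1; ext i
    rw [map_smul, ← hav i, p2_lift1, smul_eq_mul, mul_one]
  have hT0 : (0:ℝ) < ∑ i, c i := by rwa [h2] at hq2
  have hmem := hAconv.sum_mem (t := Finset.univ) (w := fun i => (∑ i, c i)⁻¹ * c i) (z := a)
    (fun i _ => mul_nonneg (inv_nonneg.2 hT0.le) (hc i))
    (by rw [← Finset.mul_sum]; field_simp)
    (fun i _ => ha i)
  have heq : ∑ i, ((∑ i, c i)⁻¹ * c i) • a i = (∑ i, c i)⁻¹ • ∑ i, c i • a i := by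
    rw [Finset.smul_sum]
    congr 1; ext i
    rw [smul_smul]
  rw [heq] at hmem
  rw [h1, h2]
  exact hmem

/-- points of `hom A` with positive last coordinate dehomogenize into `A` (for `A` closed
convex). -/
lemma homog_section {A : Set (Em m)} (hAcl : IsClosed A) (hAconv : Convex ℝ A) {x : Em1 m}
    (hx : x ∈ homog A) (hx2 : 0 < p2 m x) :
    (p2 m x)⁻¹ • p1 m x ∈ A := by
  rw [homog, mem_closure_iff_seq_limit] at hx
  obtain ⟨q, hq, hqx⟩ := hx
  have h2 : Tendsto (fun n => p2 m (q n)) atTop (𝓝 (p2 m x)) :=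
    ((p2 m).continuous.tendsto _).comp hqx
  have h1 : Tendsto (fun n => p1 m (q n)) atTop (𝓝 (p1 m x)) :=
    ((p1 m).continuous.tendsto _).comp hqx
  have hev : ∀ᶠ n in atTop, 0 < p2 m (q n) := h2.eventually (eventually_gt_nhds hx2)
  refine hAcl.mem_of_tendsto ((h2.inv₀ hx2.ne').smul h1) ?_
  filter_upwards [hev] with n hn
  exact coneHull_section hAconv (hq n) hn

end HomogLemmas

section Support

variable {m : ℕ}

/-- Supporting hyperplane at a frontier point of a closed convex cone. -/
lemma exists_supporting (K : Set (Em1 m)) (hcl : IsClosed K) (hconv : Convex ℝ K)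
    (h0 : (0 : Em1 m) ∈ K) (hcone : ∀ a : ℝ, 0 ≤ a → ∀ x ∈ K, a • x ∈ K)
    {u : Em1 m} (hu : u ∈ frontier K) :
    ∃ w : Em1 m, ‖w‖ = 1 ∧ ⟪w, u⟫_ℝ = 0 ∧ ∀ x ∈ K, ⟪w, x⟫_ℝ ≤ 0 := by
  have huK : u ∈ K := hcl.closure_eq ▸ hu.1
  have hucl : u ∈ closure Kᶜ := by
    rw [closure_compl]
    exact hu.2
  rw [mem_closure_iff_seq_limit] at hucl
  obtain ⟨q, hq, hqu⟩ := hucl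
  -- projections
  have hproj : ∀ n : ℕ, ∃ v ∈ K, ∀ x ∈ K, ⟪q n - v, x - v⟫_ℝ ≤ 0 := by
    intro n
    obtain ⟨v, hvK, hv⟩ := exists_norm_eq_iInf_of_complete_convex ⟨0, h0⟩
      (hcl.isComplete) hconv (q n)
    exact ⟨v, hvK, (norm_eq_iInf_iff_real_inner_le_zero hconv hvK).1 hv⟩
  choose v hvK hv using hproj
  have hdne : ∀ n, q n - v n ≠ 0 := by
    intro n h
    exact hq n (by rw [sub_eq_zero] at h; rw [h]; exact hvK n)
  set d : ℕ → Em1 m := fun n => q n - v n with hd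
  -- ⟪d n, v n⟫ = 0 and ⟪d n, x⟫ ≤ 0 on K
  have hdv : ∀ n, ⟪d n, v n⟫_ℝ = 0 := by
    intro n
    have h1 := hv n 0 h0
    have h2 := hv n ((2 : ℝ) • v n) (hcone 2 (by norm_num) _ (hvK n))
    rw [zero_sub, inner_neg_right] at h1
    have h2' : ⟪d n, v n⟫_ℝ ≤ 0 := by
      have : (2 : ℝ) • v n - v n = v n := by
        rw [two_smul]; abel
      rwa [this] at h2
    linarith
  have hdK : ∀ n, ∀ x ∈ K, ⟪d n, x⟫_ℝ ≤ 0 := by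
    intro n x hx
    have := hv n x hx
    rw [inner_sub_right, hdv n, sub_zero] at this
    exact this
  set w : ℕ → Em1 m := fun n => ‖d n‖⁻¹ • d n with hw
  have hwnorm : ∀ n, ‖w n‖ = 1 := by
    intro n
    rw [hw, norm_smul, norm_inv, norm_norm,
      inv_mul_cancel₀ (norm_ne_zero_iff.2 (hdne n))]
  have hwK : ∀ n, ∀ x ∈ K, ⟪w n, x⟫_ℝ ≤ 0 := by
    intro n x hx
    rw [hw, real_inner_smul_left]
    exact mul_nonpos_of_nonneg_of_nonpos (inv_nonneg.2 (norm_nonneg _)) (hdK n x hx)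
  have hwu_lb : ∀ n, -‖q n - u‖ ≤ ⟪w n, u⟫_ℝ := by
    intro n
    have h1 : ⟪w n, q n⟫_ℝ = ‖d n‖ := by
      rw [hw, real_inner_smul_left]
      have : ⟪d n, q n⟫_ℝ = ⟪d n, d n⟫_ℝ + ⟪d n, v n⟫_ℝ := by
        rw [← inner_add_right]
        have hqd : d n + v n = q n := by simp [hd]
        rw [hqd]
      rw [this, hdv n, add_zero, real_inner_self_eq_norm_sq]
      field_simp [norm_ne_zero_iff.2 (hdne n)]
    have h2 : ⟪w n, u⟫_ℝ = ⟪w n, q n⟫_ℝ - ⟪w n, q n - u⟫_ℝ := by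
      rw [inner_sub_right]; ring
    have h3 : ⟪w n, q n - u⟫_ℝ ≤ ‖q n - u‖ := by
      calc ⟪w n, q n - u⟫_ℝ ≤ ‖w n‖ * ‖q n - u‖ := real_inner_le_norm _ _
        _ = ‖q n - u‖ := by rw [hwnorm n, one_mul]
    rw [h2, h1]
    have : (0:ℝ) ≤ ‖d n‖ := norm_nonneg _
    linarith
  -- compactness
  obtain ⟨w₀, hw₀s, φ, hφ, hφt⟩ := (isCompact_sphere (0 : Em1 m) 1).tendsto_subseq
    (fun n => by rw [mem_sphere_iff_norm, sub_zero]; exact hwnorm n)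
  refine ⟨w₀, by rwa [mem_sphere_iff_norm, sub_zero] at hw₀s, ?_, ?_⟩
  · have htend : Tendsto (fun n => ⟪w (φ n), u⟫_ℝ) atTop (𝓝 ⟪w₀, u⟫_ℝ) :=
      hφt.inner tendsto_const_nhds
    have hle : ⟪w₀, u⟫_ℝ ≤ 0 :=
      le_of_tendsto htend (Eventually.of_forall fun n => hwK (φ n) u huK)
    have hge : (0:ℝ) ≤ ⟪w₀, u⟫_ℝ := by
      have hnt : Tendsto (fun n => -‖q (φ n) - u‖) atTop (𝓝 0) := by
        have : Tendsto (fun n => ‖q (φ n) - u‖) atTop (𝓝 0) := by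
          have := (tendsto_sub_nhds_zero_iff.2 (hqu.comp hφ.tendsto_atTop))
          exact tendsto_norm_zero.comp this
        simpa using this.neg
      exact le_of_tendsto_of_tendsto' hnt htend (fun n => hwu_lb (φ n))
    linarith
  · intro x hx
    have htend : Tendsto (fun n => ⟪w (φ n), x⟫_ℝ) atTop (𝓝 ⟪w₀, x⟫_ℝ) :=
      hφt.inner tendsto_const_nhds
    exact le_of_tendsto htend (Eventually.of_forall fun n => hwK (φ n) x hx)

end Support

/-- If `A ⊆ B` are nonempty closed convex sets with `d_tH(hom A, hom B) ≤ δ` for some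
`δ ∈ (0,1)` and `y ∈ bd A`, then there is a nonzero `z ∈ bd(hom B)` with
`d(z/‖z‖, cone{(y,1)}) ≤ δ`. -/
theorem exists_nonzero_boundary_point_of_homogenization_close_to_ray
    {m : ℕ} (A B : Set (Em m)) (hAne : A.Nonempty) (hBne : B.Nonempty)
    (hAcl : IsClosed A) (hBcl : IsClosed B)
    (hAconv : Convex ℝ A) (hBconv : Convex ℝ B) (hAB : A ⊆ B)
    (δ : ℝ) (hδ : δ ∈ Set.Ioo (0:ℝ) 1) (hd : dtH (homog A) (homog B) ≤ δ)
    (y : Em m) (hy : y ∈ frontier A) :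
    ∃ z ∈ frontier (homog B), z ≠ 0 ∧
      infDist (‖z‖⁻¹ • z) (ray (lift1 y)) ≤ δ := by
  obtain ⟨hδ0, hδ1⟩ := hδ
  have hyA : y ∈ A := hAcl.closure_eq ▸ hy.1
  -- the unit point on the ray
  have hl1 : lift1 y ≠ 0 := by
    intro h
    have := congrArg (p2 m) h
    rw [p2_lift1, map_zero] at this
    exact one_ne_zero this
  set s : ℝ := ‖lift1 y‖⁻¹ with hs
  have hs0 : 0 < s := inv_pos.2 (norm_pos_iff.2 hl1)
  set u : Em1 m := s • lift1 y with hu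
  have hunorm : ‖u‖ = 1 := by
    rw [hu, norm_smul, hs, norm_inv, norm_norm,
      inv_mul_cancel₀ (norm_ne_zero_iff.2 hl1)]
  have huA : u ∈ homog A := homog_smul_mem hs0.le (mem_homog_of_mem hyA)
  -- u is on the frontier of hom A
  have hufr : u ∈ frontier (homog A) := by
    constructor
    · exact subset_closure huA
    · -- not in interior: approximate by points outside hom A
      show u ∈ (interior (homog A))ᶜ
      rw [← closure_compl]
      have hyc : y ∈ closure Aᶜ := by rw [closure_compl]; exact hy.2
      rw [mem_closure_iff_seq_limit] at hyc ⊢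
      obtain ⟨yn, hyn, hynt⟩ := hyc
      refine ⟨fun n => s • lift1 (yn n), fun n => ?_, ?_⟩
      · intro hmem
        apply hyn n
        have h2 : p2 m (s • lift1 (yn n)) = s := by
          rw [map_smul, p2_lift1, smul_eq_mul, mul_one]
        have h1 : p1 m (s • lift1 (yn n)) = s • yn n := by
          rw [map_smul, p1_lift1]
        have := homog_section hAcl hAconv hmem (by rw [h2]; exact hs0)
        rw [h2, h1, smul_smul, inv_mul_cancel₀ hs0.ne', one_smul] at this
        exact this
      · exact (((continuous_const_smul s).comp continuous_lift1).tendsto y).comp hynt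
  -- supporting hyperplane of hom A at u
  obtain ⟨w, hwn, hwu, hwA⟩ := exists_supporting (homog A) (isClosed_homog A)
    (convex_homog A) (zero_mem_homog A) (fun a ha x hx => homog_smul_mem ha hx) hufr
  -- Hausdorff distance facts
  have h0A : (0 : Em1 m) ∈ homog A ∩ closedBall 0 1 :=
    ⟨zero_mem_homog A, mem_closedBall_self zero_le_one⟩
  have hedist : EMetric.hausdorffEdist (homog A ∩ closedBall 0 1)
      (homog B ∩ closedBall 0 1) ≠ ⊤ := by
    apply Metric.hausdorffEdist_ne_top_of_nonempty_of_bounded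
    · exact ⟨0, h0A⟩
    · exact ⟨0, zero_mem_homog B, mem_closedBall_self zero_le_one⟩
    · exact (isBounded_closedBall).subset inter_subset_right
    · exact (isBounded_closedBall).subset inter_subset_right
  -- key inequality
  have key : ∀ x : Em1 m, x ∈ homog B → x ≠ 0 → ⟪w, x⟫_ℝ ≤ δ * ‖x‖ := by
    intro x hx hx0
    have hxn : (0:ℝ) < ‖x‖ := norm_pos_iff.2 hx0
    set x' : Em1 m := ‖x‖⁻¹ • x with hx'
    have hx'B : x' ∈ homog B ∩ closedBall 0 1 := by
      constructor
      · exact homog_smul_mem (inv_nonneg.2 hxn.le) hx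
      · rw [mem_closedBall, dist_zero_right, hx', norm_smul, norm_inv, norm_norm,
          inv_mul_cancel₀ hxn.ne']
    have hinf : infDist x' (homog A ∩ closedBall 0 1) ≤ δ := by
      calc infDist x' (homog A ∩ closedBall 0 1)
          ≤ hausdorffDist (homog B ∩ closedBall 0 1) (homog A ∩ closedBall 0 1) :=
            infDist_le_hausdorffDist_of_mem hx'B (by rwa [EMetric.hausdorffEdist_comm])
        _ = dtH (homog A) (homog B) := by rw [dtH, hausdorffDist_comm]
        _ ≤ δ := hd
    have hwx' : ⟪w, x'⟫_ℝ ≤ δ := by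
      refine le_of_forall_pos_le_add fun ε hε => ?_
      have : infDist x' (homog A ∩ closedBall 0 1) < δ + ε := lt_of_le_of_lt hinf (by linarith)
      obtain ⟨a, haA, hax⟩ := (infDist_lt_iff ⟨0, h0A⟩).1 this
      have h1 : ⟪w, x' - a⟫_ℝ ≤ ‖x' - a‖ := by
        calc ⟪w, x' - a⟫_ℝ ≤ ‖w‖ * ‖x' - a‖ := real_inner_le_norm _ _
          _ = ‖x' - a‖ := by rw [hwn, one_mul]
      have h2 : ⟪w, a⟫_ℝ ≤ 0 := hwA a haA.1
      have h3 : ⟪w, x'⟫_ℝ = ⟪w, x' - a⟫_ℝ + ⟪w, a⟫_ℝ := by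
        rw [← inner_add_right]; congr 1; abel
      rw [dist_eq_norm] at hax
      linarith
    have : ⟪w, x'⟫_ℝ = ‖x‖⁻¹ * ⟪w, x⟫_ℝ := by
      rw [hx', real_inner_smul_right]
    rw [this] at hwx'
    calc ⟪w, x⟫_ℝ = ‖x‖ * (‖x‖⁻¹ * ⟪w, x⟫_ℝ) := by field_simp
      _ ≤ ‖x‖ * δ := by
          exact mul_le_mul_of_nonneg_left hwx' hxn.le
      _ = δ * ‖x‖ := mul_comm _ _
  -- the set S of admissible t
  set S : Set ℝ := {t : ℝ | 0 ≤ t ∧ u + t • w ∈ homog B} with hS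
  have huB : u ∈ homog B := homog_mono hAB huA
  have h0S : (0:ℝ) ∈ S := ⟨le_refl 0, by simpa using huB⟩
  have hnormut : ∀ t : ℝ, ‖u + t • w‖ ^ 2 = 1 + t ^ 2 := by
    intro t
    rw [norm_add_sq_real, hunorm, real_inner_smul_right, real_inner_comm, hwu,
      norm_smul, hwn]
    simp [mul_pow]
  have hut_ne : ∀ t : ℝ, u + t • w ≠ 0 := by
    intro t h
    have := hnormut t
    rw [h, norm_zero] at this
    nlinarith [sq_nonneg t]
  have hnorm_le : ∀ t : ℝ, 0 ≤ t → ‖u + t • w‖ ≤ 1 + t := by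
    intro t ht
    calc ‖u + t • w‖ ≤ ‖u‖ + ‖t • w‖ := norm_add_le _ _
      _ = 1 + t := by rw [hunorm, norm_smul, hwn, mul_one, Real.norm_of_nonneg ht]
  have hinner_ut : ∀ t : ℝ, ⟪w, u + t • w⟫_ℝ = t := by
    intro t
    rw [inner_add_right, hwu, real_inner_smul_right, real_inner_self_eq_norm_sq, hwn]
    ring
  have hSbdd : BddAbove S := by
    refine ⟨δ / (1 - δ), fun t ht => ?_⟩
    obtain ⟨ht0, htB⟩ := ht
    have h1 : t ≤ δ * ‖u + t • w‖ := by
      have := key _ htB (hut_ne t)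
      rwa [hinner_ut t] at this
    have h2 : t ≤ δ * (1 + t) :=
      h1.trans (mul_le_mul_of_nonneg_left (hnorm_le t ht0) hδ0.le)
    rw [le_div_iff₀ (by linarith)]
    nlinarith
  have hScl : IsClosed S := by
    have hSeq : S = Ici (0:ℝ) ∩ (fun t : ℝ => u + t • w) ⁻¹' (homog B) := rfl
    rw [hSeq]
    exact isClosed_Ici.inter ((isClosed_homog B).preimage
      (continuous_const.add (continuous_id.smul continuous_const)))
  set t₀ : ℝ := sSup S with ht₀
  have ht₀S : t₀ ∈ S := hScl.csSup_mem ⟨0, h0S⟩ hSbdd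
  obtain ⟨ht₀0, ht₀B⟩ := ht₀S
  set z : Em1 m := u + t₀ • w with hz
  have hznorm2 : ‖z‖ ^ 2 = 1 + t₀ ^ 2 := hnormut t₀
  have hz0 : z ≠ 0 := hut_ne t₀
  have hzn : (0:ℝ) < ‖z‖ := norm_pos_iff.2 hz0
  refine ⟨z, ?_, hz0, ?_⟩
  · constructor
    · exact subset_closure ht₀B
    · -- not interior: points u + t w for t > t₀ are outside hom B
      intro hint
      rw [mem_interior_iff_mem_nhds, Metric.mem_nhds_iff] at hint
      obtain ⟨r, hr, hball⟩ := hint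
      have hmem : u + (t₀ + r/2) • w ∈ homog B := by
        apply hball
        rw [mem_ball, dist_eq_norm]
        have : u + (t₀ + r/2) • w - z = (r/2) • w := by
          rw [hz, add_smul]; abel
        rw [this, norm_smul, hwn, mul_one, Real.norm_of_nonneg (by linarith)]
        linarith
      have : t₀ + r/2 ∈ S := ⟨by linarith, hmem⟩
      have := le_csSup hSbdd this
      linarith
  · -- distance estimate
    have hray : (‖z‖⁻¹ * s) • lift1 y ∈ ray (lift1 y) :=
      ⟨‖z‖⁻¹ * s, mul_nonneg (inv_nonneg.2 hzn.le) hs0.le, rfl⟩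
    have hd1 : infDist (‖z‖⁻¹ • z) (ray (lift1 y)) ≤ dist (‖z‖⁻¹ • z) ((‖z‖⁻¹ * s) • lift1 y) :=
      infDist_le_dist_of_mem hray
    have heq : (‖z‖⁻¹ * s) • lift1 y = ‖z‖⁻¹ • u := by
      rw [hu, smul_smul]
    rw [heq] at hd1
    have hdist : dist (‖z‖⁻¹ • z) (‖z‖⁻¹ • u) = ‖z‖⁻¹ * t₀ := by
      rw [dist_eq_norm, ← smul_sub, norm_smul, norm_inv, norm_norm]
      have : z - u = t₀ • w := by rw [hz]; abel
      rw [this, norm_smul, hwn, mul_one, Real.norm_of_nonneg ht₀0]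
    rw [hdist] at hd1
    have hkey : t₀ ≤ δ * ‖z‖ := by
      have := key z ht₀B hz0
      rwa [hz, hinner_ut t₀] at this
    calc infDist (‖z‖⁻¹ • z) (ray (lift1 y)) ≤ ‖z‖⁻¹ * t₀ := hd1
      _ ≤ ‖z‖⁻¹ * (δ * ‖z‖) := mul_le_mul_of_nonneg_left hkey (inv_nonneg.2 hzn.le)
      _ = δ := by field_simp
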